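/- Let k be a field, l ≥ 1, and let A be a nonzero l×l matrix over k whose characteristic polynomial q is irreducible over k. The following are equivalent: (1) A is similar to (I − A)ᵗ; (2) A is similar to I − A; (3) some root λ of q in an algebraic closure of k satisfies q(1 − λ) = 0; (4) every root λ of q in an algebraic closure of k satisfies q(1 − λ) = 0. Moreover, if char k ≠ 2, deg q > 1, and these equivalent conditions hold, then deg q is even. -/

import Mathlib

open Matrix Polynomial

section Aux
variable {k : Type*} [Field k] {l : ℕ}




lemma aux_charpoly_conj (S A : Matrix (Fin l) (Fin l) k) (hS : IsUnit S.det) :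
    (S * A * S⁻¹).charpoly = A.charpoly := by
  have hS1 : S * S⁻¹ = 1 := Matrix.mul_nonsing_inv S hS
  have hdet : (C : k →+* k[X]) S.det * (C : k →+* k[X]) S⁻¹.det = 1 := by
    rw [← _root_.map_mul, ← Matrix.det_mul, hS1, Matrix.det_one, _root_.map_one]
  have hcomm : ∀ N : Matrix (Fin l) (Fin l) k[X],
      Matrix.scalar (Fin l) (X : k[X]) * N = N * Matrix.scalar (Fin l) (X : k[X]) :=
    fun N => (Matrix.scalar_commute (X : k[X]) (fun r => Commute.all _ r) N).eq
  have hmap : charmatrix (S * A * S⁻¹) =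
      (C : k →+* k[X]).mapMatrix S * charmatrix A * (C : k →+* k[X]).mapMatrix S⁻¹ := by
    simp only [charmatrix, mul_sub, sub_mul]
    congr 1
    · rw [← hcomm, Matrix.mul_assoc, ← _root_.map_mul, hS1, _root_.map_one, Matrix.mul_one]
    · simp only [← _root_.map_mul, Matrix.mul_assoc]
  rw [Matrix.charpoly, hmap, Matrix.det_mul, Matrix.det_mul, Matrix.charpoly,
    ← RingHom.map_det, ← RingHom.map_det]
  rw [mul_comm ((C : k →+* k[X]) S.det * A.charmatrix.det) _, ← mul_assoc, mul_comm ((C : k →+* k[X]) S⁻¹.det) _, hdet, one_mul]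

lemma aux_charpoly_transpose (M : Matrix (Fin l) (Fin l) k) : Mᵀ.charpoly = M.charpoly := by
  have h : charmatrix Mᵀ = (charmatrix M)ᵀ := by
    ext i j : 2
    rw [Matrix.transpose_apply]
    by_cases h : i = j
    · subst h; simp
    · rw [charmatrix_apply_ne _ _ _ h, Matrix.transpose_apply,
        charmatrix_apply_ne _ _ _ (Ne.symm h)]
  rw [Matrix.charpoly, h, Matrix.det_transpose, Matrix.charpoly]


lemma aux_comp_eq_aeval (p r : k[X]) : p.comp r = aeval r p := by
  rw [Polynomial.aeval_def, Polynomial.algebraMap_eq]; rfl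

lemma aux_comp_one_sub (A : Matrix (Fin l) (Fin l) k) :
    (Matrix.charpoly A).comp (1 - X) = (-1 : k[X]) ^ l * Matrix.charpoly (1 - A) := by
  have hmap : (charmatrix A).map (aeval (1 - X : k[X])) = -(charmatrix (1 - A)) := by
    ext i j : 2
    rw [Matrix.map_apply, Matrix.neg_apply]
    by_cases h : i = j
    · subst h
      rw [charmatrix_apply_eq, charmatrix_apply_eq, Matrix.sub_apply, Matrix.one_apply_eq]
      simp only [map_sub, _root_.map_one, aeval_X, aeval_C, Polynomial.algebraMap_eq, Polynomial.C_1]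
      ring
    · rw [charmatrix_apply_ne _ _ _ h, charmatrix_apply_ne _ _ _ h, Matrix.sub_apply,
        Matrix.one_apply_ne h]
      simp only [_root_.map_neg, map_sub, _root_.map_zero, aeval_C, Polynomial.algebraMap_eq, zero_sub]
      ring
  have h1 : (Matrix.charpoly A).comp (1 - X) = aeval (1 - X : k[X]) (Matrix.charpoly A) :=
    aux_comp_eq_aeval _ _
  rw [h1, Matrix.charpoly, ← AlgHom.coe_toRingHom, RingHom.map_det, RingHom.mapMatrix_apply,
    AlgHom.coe_toRingHom, hmap, Matrix.det_neg, Matrix.charpoly]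
  simp [Fintype.card_fin]


lemma aux_sum_mulVec {ι : Type*} (s : Finset ι) (f : ι → Matrix (Fin l) (Fin l) k)
    (v : Fin l → k) : (∑ x ∈ s, f x).mulVec v = ∑ x ∈ s, (f x).mulVec v := by
  induction s using Finset.cons_induction with
  | empty => simp [Matrix.zero_mulVec]
  | cons a s ha ih => rw [Finset.sum_cons, Finset.sum_cons, Matrix.add_mulVec, ih]

lemma aux_aeval_mulVec (hl : 0 < l) (M : Matrix (Fin l) (Fin l) k) {q : k[X]} (hq : q.Monic)
    (hdeg : q.natDegree = l) (hM : aeval M q = 0) (p : k[X]) (v : Fin l → k) :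
    (aeval M p).mulVec v = ∑ r : Fin l, (p %ₘ q).coeff (r : ℕ) • (M ^ (r : ℕ)).mulVec v := by
  have hrdeg : (p %ₘ q).natDegree < l := by
    by_cases h0 : p %ₘ q = 0
    · rw [h0]; simpa using hl
    · rw [← hdeg]
      exact Polynomial.natDegree_lt_natDegree h0 (Polynomial.degree_modByMonic_lt p hq)
  have h1 : aeval M p = aeval M (p %ₘ q) := by
    conv_lhs => rw [← Polynomial.modByMonic_add_div p q]
    rw [map_add, _root_.map_mul, hM, zero_mul, add_zero]
  rw [h1, Polynomial.aeval_eq_sum_range' hrdeg, ← Fin.sum_univ_eq_sum_range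
    (fun i => (p %ₘ q).coeff i • M ^ i) l, aux_sum_mulVec]
  simp [Matrix.smul_mulVec]

lemma aux_linIndep (hl : 0 < l) {q : k[X]} (hq : Irreducible q) (hmon : q.Monic)
    (hdeg : q.natDegree = l) (M : Matrix (Fin l) (Fin l) k) (hM : aeval M q = 0)
    {v : Fin l → k} (hv : v ≠ 0) :
    LinearIndependent k (fun j : Fin l => (M ^ (j : ℕ)).mulVec v) := by
  rw [Fintype.linearIndependent_iff]
  intro c hc
  set p : k[X] := ∑ j : Fin l, C (c j) * X ^ (j : ℕ) with hp
  have hpc : ∀ n : ℕ, p.coeff n = if h : n < l then c ⟨n, h⟩ else 0 := by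
    intro n
    rw [hp, Polynomial.finset_sum_coeff]
    simp only [Polynomial.coeff_C_mul, Polynomial.coeff_X_pow]
    by_cases h : n < l
    · rw [dif_pos h, Finset.sum_eq_single (⟨n, h⟩ : Fin l)]
      · simp
      · intro b _ hb
        rw [if_neg, mul_zero]
        exact fun he => hb (Fin.ext (by simpa using he.symm))
      · simp
    · rw [dif_neg h]
      apply Finset.sum_eq_zero
      intro b _
      rw [if_neg, mul_zero]
      exact fun he => h (he ▸ b.isLt)
  have hpdeg : p.degree < q.degree := by
    rw [Polynomial.degree_eq_natDegree hmon.ne_zero, hdeg]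
    rw [Polynomial.degree_lt_iff_coeff_zero]
    intro m hm
    rw [hpc m, dif_neg]
    exact_mod_cast fun h => absurd hm (by exact_mod_cast not_le.2 (by exact_mod_cast h))
  have hann : (aeval M p).mulVec v = 0 := by
    rw [hp, map_sum, aux_sum_mulVec]
    have : ∀ j : Fin l, (aeval M (C (c j) * X ^ (j : ℕ))).mulVec v
        = c j • (M ^ (j : ℕ)).mulVec v := by
      intro j
      rw [_root_.map_mul, aeval_C]
      simp [Algebra.algebraMap_eq_smul_one, smul_mul_assoc, Matrix.smul_mulVec]
    rw [Finset.sum_congr rfl (fun j _ => this j)]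
    exact hc
  have hp0 : p = 0 := by
    by_contra hne
    have hndvd : ¬ q ∣ p := fun hd =>
      absurd (Polynomial.degree_le_of_dvd hd hne) (not_le.2 hpdeg)
    obtain ⟨a, b, hab⟩ := (hq.coprime_iff_not_dvd.mpr hndvd)
    have : v = 0 := by
      have h1 := congrArg (fun r : k[X] => (aeval M r).mulVec v) hab
      rw [map_add, _root_.map_mul, _root_.map_mul, hM, mul_zero, zero_add,
        _root_.map_one, Matrix.one_mulVec, ← Matrix.mulVec_mulVec, hann,
        Matrix.mulVec_zero] at h1
      exact h1.symm
    exact hv this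
  intro j
  have := hpc (j : ℕ)
  rw [hp0, Polynomial.coeff_zero, dif_pos j.isLt] at this
  simpa using this.symm

lemma aux_similar (hl : 0 < l) (A B : Matrix (Fin l) (Fin l) k)
    (hirr : Irreducible A.charpoly) (hAB : B.charpoly = A.charpoly) :
    ∃ S : Matrix (Fin l) (Fin l) k, IsUnit S.det ∧ S * A * S⁻¹ = B := by
  set q := A.charpoly with hq
  have hmon : q.Monic := A.charpoly_monic
  have hdeg : q.natDegree = l := by rw [hq, A.charpoly_natDegree_eq_dim, Fintype.card_fin]
  have hAq : aeval A q = 0 := A.aeval_self_charpoly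
  have hBq : aeval B q = 0 := by rw [← hAB]; exact B.aeval_self_charpoly
  set v : Fin l → k := Pi.single ⟨0, hl⟩ 1 with hv
  have hv0 : v ≠ 0 := by
    intro h
    have := congrFun h ⟨0, hl⟩
    rw [hv] at this
    simp at this
  set Pm : Matrix (Fin l) (Fin l) k → Matrix (Fin l) (Fin l) k :=
    fun M => Matrix.of fun i j => ((M ^ (j : ℕ)) *ᵥ v) i with hPm
  have hPunit : ∀ M, aeval M q = 0 → IsUnit (Pm M).det := by
    intro M hM
    rw [← Matrix.isUnit_iff_isUnit_det, ← Matrix.linearIndependent_cols_iff_isUnit]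
    have hcols : (fun j => (Pm M)ᵀ j) = fun j : Fin l => (M ^ (j : ℕ)) *ᵥ v := by
      funext j
      funext i
      rfl
    change LinearIndependent k (fun j => (Pm M)ᵀ j)
    rw [hcols]
    exact aux_linIndep hl hirr hmon hdeg M hM hv0
  set Cq : Matrix (Fin l) (Fin l) k :=
    Matrix.of (fun i j => ((X : k[X]) ^ ((j : ℕ) + 1) %ₘ q).coeff (i : ℕ)) with hCq
  have key : ∀ M, aeval M q = 0 → M * Pm M = Pm M * Cq := by
    intro M hM
    ext i j
    have h2 := aux_aeval_mulVec hl M hmon hdeg hM ((X : k[X]) ^ ((j : ℕ) + 1)) v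
    rw [aeval_X_pow] at h2
    have lhs : (M * Pm M) i j = ((M ^ ((j : ℕ) + 1)) *ᵥ v) i := by
      rw [Matrix.mul_apply]
      have hstep : (M ^ ((j : ℕ) + 1)) *ᵥ v = M *ᵥ ((M ^ (j : ℕ)) *ᵥ v) := by
        rw [Matrix.mulVec_mulVec, ← pow_succ']
      rw [hstep]
      simp [Matrix.mulVec, dotProduct, hPm]
    have rhs : (Pm M * Cq) i j = ((M ^ ((j : ℕ) + 1)) *ᵥ v) i := by
      rw [Matrix.mul_apply, h2]
      rw [Finset.sum_apply]
      apply Finset.sum_congr rfl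
      intro r _
      simp [hPm, hCq, mul_comm]
    rw [lhs, rhs]
  have hPA := hPunit A hAq
  have hPB := hPunit B hBq
  have keyA := key A hAq
  have keyB := key B hBq
  have hS : IsUnit (Pm B * (Pm A)⁻¹).det := by
    rw [Matrix.det_mul]
    exact hPB.mul ((Matrix.isUnit_nonsing_inv_det _ hPA))
  refine ⟨Pm B * (Pm A)⁻¹, hS, ?_⟩
  have e1 : (Pm A)⁻¹ * A = Cq * (Pm A)⁻¹ := by
    calc (Pm A)⁻¹ * A = (Pm A)⁻¹ * A * (Pm A * (Pm A)⁻¹) := by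
          rw [Matrix.mul_nonsing_inv _ hPA, Matrix.mul_one]
    _ = (Pm A)⁻¹ * (A * Pm A) * (Pm A)⁻¹ := by simp only [Matrix.mul_assoc]
    _ = (Pm A)⁻¹ * (Pm A * Cq) * (Pm A)⁻¹ := by rw [keyA]
    _ = ((Pm A)⁻¹ * Pm A) * Cq * (Pm A)⁻¹ := by simp only [Matrix.mul_assoc]
    _ = Cq * (Pm A)⁻¹ := by rw [Matrix.nonsing_inv_mul _ hPA, Matrix.one_mul]
  have hSA : Pm B * (Pm A)⁻¹ * A = B * (Pm B * (Pm A)⁻¹) := by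
    calc Pm B * (Pm A)⁻¹ * A = Pm B * (Cq * (Pm A)⁻¹) := by rw [Matrix.mul_assoc, e1]
    _ = (Pm B * Cq) * (Pm A)⁻¹ := by rw [Matrix.mul_assoc]
    _ = (B * Pm B) * (Pm A)⁻¹ := by rw [← keyB]
    _ = B * (Pm B * (Pm A)⁻¹) := by rw [Matrix.mul_assoc]
  rw [hSA, Matrix.mul_assoc, Matrix.mul_nonsing_inv _ hS, Matrix.mul_one]


lemma aux_even_card {α : Type*} [DecidableEq α] (σ : α → α) (hσ : Function.Involutive σ) :
    ∀ s : Multiset α, s.map σ = s → (∀ x ∈ s, σ x ≠ x) → Even (Multiset.card s) := by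
  intro s
  induction s using Multiset.strongInductionOn with
  | _ s ih =>
    intro hmap hfix
    rcases Multiset.empty_or_exists_mem s with rfl | ⟨a, ha⟩
    · simp
    · have hinj := hσ.injective
      have hσa : σ a ∈ s := by rw [← hmap]; exact Multiset.mem_map_of_mem σ ha
      have hne : σ a ≠ a := hfix a ha
      have hσa' : σ a ∈ s.erase a := (Multiset.mem_erase_of_ne hne).2 hσa
      set t := (s.erase a).erase (σ a) with ht
      have hst : s = a ::ₘ σ a ::ₘ t := by
        rw [ht, Multiset.cons_erase hσa', Multiset.cons_erase ha]
      have htlt : t < s :=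
        lt_of_le_of_lt (Multiset.erase_le _ _) (Multiset.erase_lt.2 ha)
      have htmap : t.map σ = t := by
        rw [ht, Multiset.map_erase _ hinj, Multiset.map_erase _ hinj, hσ a, hmap,
          Multiset.erase_comm]
      have htfix : ∀ x ∈ t, σ x ≠ x := fun x hx =>
        hfix x (Multiset.mem_of_le (le_of_lt htlt) hx)
      have hev := ih t htlt htmap htfix
      rw [hst]
      simp only [Multiset.card_cons]
      rcases hev with ⟨m, hm⟩
      exact ⟨m + 1, by omega⟩

lemma aux_eq_of_dvd {p r : k[X]} (hp : p.Monic) (hr : r.Monic)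
    (hdeg : p.natDegree = r.natDegree) (hdvd : p ∣ r) : r = p := by
  obtain ⟨c, hc⟩ := hdvd
  have hc0 : c ≠ 0 := by rintro rfl; rw [mul_zero] at hc; exact hr.ne_zero hc
  have hnd : p.natDegree + c.natDegree = r.natDegree := by
    rw [hc, Polynomial.natDegree_mul hp.ne_zero hc0]
  have hcd : c.natDegree = 0 := by omega
  have hcc : c = C (c.coeff 0) := Polynomial.eq_C_of_natDegree_eq_zero hcd
  have hlc : r.leadingCoeff = p.leadingCoeff * c.leadingCoeff := by
    rw [hc, Polynomial.leadingCoeff_mul]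
  rw [hp.leadingCoeff, hr.leadingCoeff, one_mul] at hlc
  rw [Polynomial.leadingCoeff, hcd] at hlc
  rw [hc, hcc, ← hlc, Polynomial.C_1, mul_one]

end Aux


/-- Let `A` be a nonzero `l×l` matrix over a field `k` whose
characteristic polynomial `q` is irreducible.  TFAE: (1) `A` is similar to `(I − A)ᵗ`;
(2) `A` is similar to `I − A`; (3) some root `λ` of `q` in an algebraic closure of `k`
satisfies `q(1 − λ) = 0`; (4) every root of `q` in an algebraic closure satisfies
`q(1 − λ) = 0`.  Moreover if `char k ≠ 2`, `deg q > 1` and these hold, then `deg q`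
is even. -/
theorem similar_to_one_sub_transpose_tfae
    {k : Type*} [Field k] {l : ℕ} (hl : 0 < l)
    (A : Matrix (Fin l) (Fin l) k) (hA : A ≠ 0)
    (hirr : Irreducible (Matrix.charpoly A)) :
    List.TFAE
      [ (∃ S : Matrix (Fin l) (Fin l) k, IsUnit S.det ∧ S * A * S⁻¹ = (1 - A)ᵀ),
        (∃ S : Matrix (Fin l) (Fin l) k, IsUnit S.det ∧ S * A * S⁻¹ = 1 - A),
        (∃ lam : AlgebraicClosure k, aeval lam (Matrix.charpoly A) = 0 ∧
          aeval (1 - lam) (Matrix.charpoly A) = 0),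
        (∀ lam : AlgebraicClosure k, aeval lam (Matrix.charpoly A) = 0 →
          aeval (1 - lam) (Matrix.charpoly A) = 0) ]
    ∧ ((2 : k) ≠ 0 → 1 < (Matrix.charpoly A).natDegree →
        (∃ S : Matrix (Fin l) (Fin l) k, IsUnit S.det ∧ S * A * S⁻¹ = 1 - A) →
        Even (Matrix.charpoly A).natDegree) := by
  classical
  set q := Matrix.charpoly A with hq
  have hmon : q.Monic := A.charpoly_monic
  have hdeg : q.natDegree = l := by rw [hq, A.charpoly_natDegree_eq_dim, Fintype.card_fin]
  have hID := aux_comp_one_sub A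
  rw [← hq] at hID
  have haev : ∀ (lam : AlgebraicClosure k) (p : k[X]),
      aeval lam (p.comp (1 - X)) = aeval (1 - lam) p := by
    intro lam p
    rw [aeval_comp]
    simp
  have hP4 : Matrix.charpoly (1 - A) = q →
      ∀ lam : AlgebraicClosure k, aeval lam q = 0 → aeval (1 - lam) q = 0 := by
    intro hP lam hlam
    have h5 := congrArg (aeval lam) hID
    rw [haev lam q, hP] at h5
    rw [h5, _root_.map_mul, map_pow, _root_.map_neg, _root_.map_one, hlam, mul_zero]
  have h3P : (∃ lam : AlgebraicClosure k, aeval lam q = 0 ∧ aeval (1 - lam) q = 0) →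
      Matrix.charpoly (1 - A) = q := by
    rintro ⟨lam, h1, h2⟩
    have hqmin : q = minpoly k lam := minpoly.eq_of_irreducible_of_monic hirr h1 hmon
    have h5 := congrArg (aeval lam) hID
    rw [haev lam q, h2, _root_.map_mul, map_pow, _root_.map_neg, _root_.map_one] at h5
    have h6 : aeval lam (Matrix.charpoly (1 - A)) = 0 := by
      rcases mul_eq_zero.1 h5.symm with h | h
      · exact absurd h (pow_ne_zero _ (neg_ne_zero.2 one_ne_zero))
      · exact h
    have hdvd : q ∣ Matrix.charpoly (1 - A) := hqmin ▸ minpoly.dvd k lam h6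
    refine aux_eq_of_dvd hmon ((1 - A).charpoly_monic) ?_ hdvd
    rw [hdeg, Matrix.charpoly_natDegree_eq_dim, Fintype.card_fin]
  have hex : ∃ lam : AlgebraicClosure k, aeval lam q = 0 := by
    apply IsAlgClosed.exists_aeval_eq_zero
    rw [Polynomial.degree_eq_natDegree hmon.ne_zero, hdeg]
    exact_mod_cast hl.ne'
  have hP3 : Matrix.charpoly (1 - A) = q →
      ∃ lam : AlgebraicClosure k, aeval lam q = 0 ∧ aeval (1 - lam) q = 0 := by
    intro hP
    obtain ⟨lam, hlam⟩ := hex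
    exact ⟨lam, hlam, hP4 hP lam hlam⟩
  have h1P : (∃ S : Matrix (Fin l) (Fin l) k, IsUnit S.det ∧ S * A * S⁻¹ = (1 - A)ᵀ) →
      Matrix.charpoly (1 - A) = q := by
    rintro ⟨S, hS, hSA⟩
    rw [← aux_charpoly_transpose (1 - A), ← hSA, aux_charpoly_conj S A hS]
  have h2P : (∃ S : Matrix (Fin l) (Fin l) k, IsUnit S.det ∧ S * A * S⁻¹ = 1 - A) →
      Matrix.charpoly (1 - A) = q := by
    rintro ⟨S, hS, hSA⟩
    rw [← hSA, aux_charpoly_conj S A hS]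
  have hP1 : Matrix.charpoly (1 - A) = q →
      ∃ S : Matrix (Fin l) (Fin l) k, IsUnit S.det ∧ S * A * S⁻¹ = (1 - A)ᵀ := by
    intro hP
    exact aux_similar hl A ((1 - A)ᵀ) hirr (by rw [aux_charpoly_transpose, hP, hq])
  have hP2 : Matrix.charpoly (1 - A) = q →
      ∃ S : Matrix (Fin l) (Fin l) k, IsUnit S.det ∧ S * A * S⁻¹ = 1 - A := by
    intro hP
    exact aux_similar hl A (1 - A) hirr (by rw [hP, hq])
  constructor
  · tfae_have 1 → 3 := fun h => hP3 (h1P h)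
    tfae_have 2 → 3 := fun h => hP3 (h2P h)
    tfae_have 3 → 4 := fun h => hP4 (h3P h)
    tfae_have 4 → 3 := fun h => hex.elim fun lam hlam => ⟨lam, hlam, h lam hlam⟩
    tfae_have 3 → 1 := fun h => hP1 (h3P h)
    tfae_have 3 → 2 := fun h => hP2 (h3P h)
    tfae_finish
  · intro h2 hdeg2 hsim
    have hP := h2P hsim
    have hID2 := hID
    rw [hP] at hID2
    set K := AlgebraicClosure k
    set qK := q.map (algebraMap k K) with hqK
    have hqK0 : qK ≠ 0 := Polynomial.map_ne_zero hmon.ne_zero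
    have hmonK : qK.Monic := hmon.map _
    have hsplit : Splits qK :=
      IsAlgClosed.splits qK
    set s := qK.roots with hs
    have hcard : Multiset.card s = l := by
      rw [hs, (Polynomial.splits_iff_card_roots).1 hsplit, hqK,
        Polynomial.natDegree_map, hdeg]
    have hprod : qK = (s.map fun r => X - C r).prod :=
      hsplit.eq_prod_roots_of_monic hmonK
    have hIDK : qK.comp (1 - X) = (-1 : K[X]) ^ l * qK := by
      have h7 := congrArg (Polynomial.map (algebraMap k K)) hID2
      rwa [Polynomial.map_comp, Polynomial.map_mul, Polynomial.map_pow,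
        Polynomial.map_neg, Polynomial.map_one, Polynomial.map_sub,
        Polynomial.map_one, Polynomial.map_X, ← hqK] at h7
    have hcomp : qK.comp (1 - X) = (-1 : K[X]) ^ l *
        ((s.map fun r => X - C (1 - r)).prod) := by
      conv_lhs => rw [hprod]
      rw [aux_comp_eq_aeval, map_multiset_prod, Multiset.map_map]
      have h8 : ∀ r ∈ s, ((aeval ((1 : K[X]) - X)) ∘ fun r => X - C r) r
          = -(X - C (1 - r)) := by
        intro r _
        simp only [Function.comp_apply, map_sub, aeval_X, aeval_C,
          Polynomial.algebraMap_eq, Polynomial.C_1]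
        ring
      rw [Multiset.map_congr rfl h8]
      have h9 : (s.map fun r => -(X - C (1 - r)))
          = ((s.map fun r => X - C (1 - r)).map Neg.neg) := by
        rw [Multiset.map_map]; rfl
      rw [h9, Multiset.prod_map_neg, Multiset.card_map, hcard]
    have hprodeq : (s.map fun r => X - C (1 - r)).prod = (s.map fun r => X - C r).prod := by
      have hu : ((-1 : K[X]) ^ l) ≠ 0 := pow_ne_zero _ (neg_ne_zero.2 one_ne_zero)
      apply mul_left_cancel₀ hu
      rw [← hcomp, hIDK, hprod]
    have hmapinv : s.map (fun r => 1 - r) = s := by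
      have h10 := congrArg Polynomial.roots hprodeq
      rwa [show (s.map fun r => X - C (1 - r))
          = ((s.map fun r => (1 : K) - r).map fun a => X - C a) by
            rw [Multiset.map_map]; rfl,
        Polynomial.roots_multiset_prod_X_sub_C,
        Polynomial.roots_multiset_prod_X_sub_C] at h10
    have hfix : ∀ x ∈ s, (1 : K) - x ≠ x := by
      intro x hx hxx
      have hx2 : x = algebraMap k K 2⁻¹ := by
        have h2x : (2 : K) * x = 1 := by linear_combination -hxx
        rw [map_inv₀, map_ofNat]
        exact (inv_eq_of_mul_eq_one_right h2x).symm
      have hroot : Polynomial.eval (2⁻¹ : k) q = 0 := by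
        have h11 : Polynomial.IsRoot qK x := Polynomial.isRoot_of_mem_roots hx
        rw [Polynomial.IsRoot, hx2, hqK, Polynomial.eval_map,
          Polynomial.eval₂_at_apply] at h11
        exact (algebraMap k K).injective (by rwa [map_zero])
      have hdvd : (X - C (2⁻¹ : k)) ∣ q := Polynomial.dvd_iff_isRoot.2 hroot
      obtain ⟨r, hr⟩ := hdvd
      rcases hirr.isUnit_or_isUnit hr with hu | hu
      · exact Polynomial.not_isUnit_X_sub_C _ hu
      · have hr0 : r ≠ 0 := by rintro rfl; rw [mul_zero] at hr; exact hmon.ne_zero hr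
        have h12 : q.natDegree = 1 + 0 := by
          rw [hr, Polynomial.natDegree_mul (Polynomial.X_sub_C_ne_zero _) hr0,
            Polynomial.natDegree_X_sub_C, Polynomial.natDegree_eq_zero_of_isUnit hu]
        omega
    have hev := aux_even_card (fun x : K => 1 - x) (fun x => by ring) s hmapinv hfix
    rw [hcard] at hev
    rw [← hdeg] at hev
    exact hev
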